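/- Let s > 0 and let P satisfy H1 and H2. Let γ be a positive solution of the Dyson–Schwinger ODE on (0, x₀] for some x₀ > 0. Then there exist x₁ ∈ (0, x₀] and a constant C > 0 such that γ_c(x) < γ(x) ≤ γ_c(x) + C·x^{1/s} + C·B_s(x, x₁) for all x ∈ (0, x₁], where B_s(x, x₁) = x^{1/s}·∫_x^{x₁} z^{−1/s} dz. In particular lim_{x→0⁺} γ(x) = 0. -/

import Mathlib

open Real MeasureTheory Filter Set
open scoped Topology

noncomputable section

/-- `γ` is a positive solution of the Dyson–Schwinger ODE
`γ'(x) = (γ(x) + γ(x)² − P(x)) / (s·x·γ(x))` on the set `I`. -/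
def IsDSSolution (s : ℝ) (P γ : ℝ → ℝ) (I : Set ℝ) : Prop :=
  (∀ x ∈ I, 0 < γ x) ∧
    ∀ x ∈ I, HasDerivWithinAt γ ((γ x + (γ x) ^ 2 - P x) / (s * x * γ x)) I x

/-- Hypothesis H1: `P` is twice continuously differentiable on `[0,∞)`,
`P 0 = 0`, and `P x > 0` for `x > 0`. -/
def H1 (P : ℝ → ℝ) : Prop :=
  ContDiffOn ℝ 2 P (Set.Ici 0) ∧ P 0 = 0 ∧ ∀ x > (0 : ℝ), 0 < P x

/-- Hypothesis H2: `P` is strictly increasing on `[0,∞)`. -/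
def H2 (P : ℝ → ℝ) : Prop := StrictMonoOn P (Set.Ici 0)

/-- The nullcline `γ_c(x) = (√(1 + 4 P x) − 1)/2`. -/
def gammaC (P : ℝ → ℝ) (x : ℝ) : ℝ := (Real.sqrt (1 + 4 * P x) - 1) / 2

/-- `B_s(x, x₁) = x^{1/s} ∫_x^{x₁} z^{−1/s} dz`. -/
def Bs (s x x₁ : ℝ) : ℝ := x ^ (1 / s) * ∫ z in x..x₁, z ^ (-(1 / s))

lemma gammaC_nonneg {P : ℝ → ℝ} {x : ℝ} (hP : 0 ≤ P x) : 0 ≤ gammaC P x := by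
  have h0 : (0:ℝ) ≤ 1 + 4 * P x := by linarith
  have h2 := Real.sq_sqrt h0
  have h3 := Real.sqrt_nonneg (1 + 4 * P x)
  unfold gammaC; nlinarith

lemma gammaC_eq {P : ℝ → ℝ} {x : ℝ} (hP : 0 ≤ P x) : gammaC P x ^ 2 + gammaC P x = P x := by
  have h0 : (0:ℝ) ≤ 1 + 4 * P x := by linarith
  have h2 := Real.sq_sqrt h0
  unfold gammaC; nlinarith

lemma gammaC_le {P : ℝ → ℝ} {x : ℝ} (hP : 0 ≤ P x) : gammaC P x ≤ P x := by
  have h1 := gammaC_eq hP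
  have h2 := gammaC_nonneg hP
  nlinarith

/-- Step 1: if the solution is at or below the nullcline at `b`, then
`γ x₀ ^ 2 ≤ P b`. -/
lemma step1 (s : ℝ) (hs : 0 < s) (P : ℝ → ℝ)
    (hPnn : ∀ x : ℝ, 0 ≤ x → 0 ≤ P x) (hPmono : MonotoneOn P (Set.Ici 0))
    (x₀ : ℝ) (hx₀ : 0 < x₀) (γ : ℝ → ℝ)
    (hpos : ∀ x ∈ Set.Ioc 0 x₀, 0 < γ x)
    (hode : ∀ x ∈ Set.Ioc 0 x₀, HasDerivWithinAt γ
      ((γ x + (γ x) ^ 2 - P x) / (s * x * γ x)) (Set.Ioc 0 x₀) x)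
    (b : ℝ) (hb0 : 0 < b) (hbx₀ : b < x₀) (hcon : γ b ≤ gammaC P b) :
    γ x₀ ^ 2 ≤ P b := by
  set gcb := gammaC P b with hgcbdef
  have hJ : Icc b x₀ ⊆ Ioc 0 x₀ := fun x hx => ⟨lt_of_lt_of_le hb0 hx.1, hx.2⟩
  have hγpos : ∀ x ∈ Icc b x₀, 0 < γ x := fun x hx => hpos x (hJ hx)
  have hgcb0 : 0 ≤ gcb := gammaC_nonneg (hPnn b hb0.le)
  have hgcbeq : gcb ^ 2 + gcb = P b := gammaC_eq (hPnn b hb0.le)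
  have hγcont : ContinuousOn γ (Icc b x₀) :=
    fun x hx => ((hode x (hJ hx)).continuousWithinAt).mono hJ
  set a : ℝ → ℝ := fun x => 2 / (s * x) * (1 + 1 / (γ x + gcb)) with hadef
  have hden : ∀ x ∈ Icc b x₀, γ x + gcb ≠ 0 := fun x hx =>
    ne_of_gt (by have := hγpos x hx; linarith)
  have hsx : ∀ x ∈ Icc b x₀, s * x ≠ 0 := fun x hx =>
    ne_of_gt (mul_pos hs (lt_of_lt_of_le hb0 hx.1))
  have hacont : ContinuousOn a (Icc b x₀) := by
    apply ContinuousOn.mul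
    · exact continuousOn_const.div (continuous_const.mul continuous_id).continuousOn hsx
    · exact continuousOn_const.add
        (continuousOn_const.div (hγcont.add continuousOn_const) hden)
  set cl : ℝ → ℝ := fun t => max b (min t x₀) with hcldef
  have hclcont : Continuous cl := continuous_const.max (continuous_id.min continuous_const)
  have hclmem : ∀ t, cl t ∈ Icc b x₀ := fun t =>
    ⟨le_max_left _ _, max_le hbx₀.le (min_le_right _ _)⟩
  have hcl_id : ∀ x ∈ Icc b x₀, cl x = x := fun x hx => by
    simp only [hcldef]
    rw [min_eq_left hx.2, max_eq_right hx.1]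
  set ab : ℝ → ℝ := fun t => a (cl t) with habdef
  have habcont : Continuous ab := hacont.comp_continuous hclcont hclmem
  set A : ℝ → ℝ := fun x => ∫ t in b..x, ab t with hAdef
  have hAderiv : ∀ x : ℝ, HasDerivAt A (ab x) x := fun x =>
    intervalIntegral.integral_hasDerivAt_right (habcont.intervalIntegrable _ _)
      (habcont.stronglyMeasurableAtFilter _ _) habcont.continuousAt
  have hAcont : Continuous A :=
    continuous_iff_continuousAt.mpr fun x => (hAderiv x).continuousAt
  set M : ℝ := P b - gcb with hMdef
  have hMeq : M = gcb ^ 2 := by rw [hMdef]; linarith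
  set g : ℝ → ℝ := fun x => (γ x ^ 2 - M) * Real.exp (-A x) with hgdef
  have hgcont : ContinuousOn g (Icc b x₀) :=
    ((hγcont.pow 2).sub continuousOn_const).mul (hAcont.neg.rexp).continuousOn
  have hderiv : ∀ x ∈ Ioo b x₀,
      HasDerivAt g (-(2 * (P x - P b) / (s * x)) * Real.exp (-A x)) x := by
    intro x hx
    have hx0 : 0 < x := lt_trans hb0 hx.1
    have hxmem : x ∈ Icc b x₀ := ⟨hx.1.le, hx.2.le⟩
    have hγx : 0 < γ x := hγpos x hxmem
    have hnbhd : Ioc 0 x₀ ∈ 𝓝 x :=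
      mem_of_superset (isOpen_Ioo.mem_nhds ⟨hx0, hx.2⟩) Ioo_subset_Ioc_self
    have hγd : HasDerivAt γ ((γ x + γ x ^ 2 - P x) / (s * x * γ x)) x :=
      (hode x ⟨hx0, hx.2.le⟩).hasDerivAt hnbhd
    have h1 : HasDerivAt (fun y => γ y ^ 2 - M)
        ((2 : ℕ) * γ x ^ 1 * ((γ x + γ x ^ 2 - P x) / (s * x * γ x))) x := by
      simpa using (hγd.pow 2).sub_const M
    have h2 : HasDerivAt (fun y => Real.exp (-A y)) (-(ab x) * Real.exp (-A x)) x := by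
      have := ((hAderiv x).neg).exp
      simpa [mul_comm] using this
    have hprod := h1.mul h2
    refine hprod.congr_deriv (Eq.symm ?_)
    simp only [habdef]
    rw [hcl_id x hxmem]
    simp only [hadef]
    have hsx0 : s * x ≠ 0 := hsx x hxmem
    have hγgcb : γ x + gcb ≠ 0 := hden x hxmem
    have hPb : P b = gcb ^ 2 + gcb := hgcbeq.symm
    rw [hMdef, hPb]
    have hE := Real.exp_pos (-A x)
    field_simp
    ring
  have hanti : AntitoneOn g (Icc b x₀) := by
    apply antitoneOn_of_deriv_nonpos (convex_Icc b x₀) hgcont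
    · intro x hx
      rw [interior_Icc] at hx
      exact (hderiv x hx).differentiableAt.differentiableWithinAt
    · intro x hx
      rw [interior_Icc] at hx
      rw [(hderiv x hx).deriv]
      have hx0 : 0 < x := lt_trans hb0 hx.1
      have hPbx : P b ≤ P x := hPmono (le_of_lt hb0) (le_of_lt hx0) hx.1.le
      have hsx0 : 0 < s * x := mul_pos hs hx0
      have hE := Real.exp_pos (-A x)
      have h1 : 0 ≤ 2 * (P x - P b) / (s * x) := div_nonneg (by linarith) hsx0.le
      nlinarith
  have hgb : g b ≤ 0 := by
    have hb' : γ b ^ 2 ≤ M := by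
      rw [hMeq]
      exact pow_le_pow_left₀ (hγpos b ⟨le_refl b, hbx₀.le⟩).le hcon 2
    have hE := Real.exp_pos (-A b)
    simp only [hgdef]
    nlinarith
  have hgx₀ : g x₀ ≤ g b :=
    hanti ⟨le_refl b, hbx₀.le⟩ ⟨hbx₀.le, le_refl x₀⟩ hbx₀.le
  have hwx₀ : γ x₀ ^ 2 - M ≤ 0 := by
    have hE := Real.exp_pos (-A x₀)
    have h := hgx₀.trans hgb
    simp only [hgdef] at h
    nlinarith
  have : M ≤ P b := by rw [hMdef]; linarith
  linarith

theorem stmt_10 (s : ℝ) (hs : 0 < s) (P : ℝ → ℝ) (hP1 : H1 P) (hP2 : H2 P)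
    (x₀ : ℝ) (hx₀ : 0 < x₀) (γ : ℝ → ℝ)
    (hγ : IsDSSolution s P γ (Set.Ioc 0 x₀)) :
    ∃ x₁ ∈ Set.Ioc (0 : ℝ) x₀, ∃ C > (0 : ℝ),
      (∀ x ∈ Set.Ioc (0 : ℝ) x₁,
        gammaC P x < γ x ∧ γ x ≤ gammaC P x + C * x ^ (1 / s) + C * Bs s x x₁) ∧
      Filter.Tendsto γ (nhdsWithin 0 (Set.Ioi 0)) (nhds 0) := by
  obtain ⟨hpos, hode⟩ := hγ
  obtain ⟨hPsm, hP0, hPpos⟩ := hP1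
  have hPnn : ∀ x : ℝ, 0 ≤ x → 0 ≤ P x := by
    intro x hx
    rcases hx.eq_or_lt with h | h
    · simp [← h, hP0]
    · exact (hPpos x h).le
  have hPmono : MonotoneOn P (Set.Ici 0) := hP2.monotoneOn
  have hγx₀ : 0 < γ x₀ := hpos x₀ ⟨hx₀, le_refl _⟩
  -- choice of x₁
  have hPc0 : Tendsto P (𝓝[Ici 0] 0) (𝓝 0) := by
    have := (hPsm.continuousOn 0 self_mem_Ici)
    simpa [ContinuousWithinAt, hP0] using this
  have hev1 : ∀ᶠ x in 𝓝[>] (0:ℝ), P x < γ x₀ ^ 2 := by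
    have h2 : ∀ᶠ x in 𝓝[Ici 0] (0:ℝ), P x < γ x₀ ^ 2 :=
      hPc0.eventually_lt_const (by positivity)
    exact h2.filter_mono (nhdsWithin_mono 0 Ioi_subset_Ici_self)
  have hev2 : ∀ᶠ x in 𝓝[>] (0:ℝ), x < x₀ :=
    eventually_nhdsWithin_of_eventually_nhds (eventually_lt_nhds hx₀)
  obtain ⟨x₁, hx₁P, hx₁lt, hx₁0⟩ : ∃ x₁, P x₁ < γ x₀ ^ 2 ∧ x₁ < x₀ ∧ 0 < x₁ := by
    rcases ((hev1.and hev2).and eventually_mem_nhdsWithin).exists with ⟨y, ⟨h1, h2⟩, h3⟩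
    exact ⟨y, h1, h2, h3⟩
  have hsub : Ioc (0:ℝ) x₁ ⊆ Ioc 0 x₀ := fun x hx => ⟨hx.1, le_trans hx.2 hx₁lt.le⟩
  -- Step 1 : above the nullcline
  have key : ∀ b ∈ Ioc (0:ℝ) x₁, gammaC P b < γ b := by
    intro b hb
    by_contra hcon
    push_neg at hcon
    have h := step1 s hs P hPnn hPmono x₀ hx₀ γ hpos hode b hb.1
      (lt_of_le_of_lt hb.2 hx₁lt) hcon
    have hPbx₁ : P b ≤ P x₁ := hPmono hb.1.le hx₁0.le hb.2
    linarith
  -- linear bound on P near 0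
  have hPder : ∀ x ∈ Icc (0:ℝ) x₁, HasDerivWithinAt P (derivWithin P (Ici 0) x) (Icc 0 x₁) x := by
    intro x hx
    exact ((hPsm.differentiableOn (by norm_num) x hx.1).hasDerivWithinAt).mono Icc_subset_Ici_self
  have hdercont : ContinuousOn (derivWithin P (Ici 0)) (Ici 0) :=
    hPsm.continuousOn_derivWithin (uniqueDiffOn_Ici 0) (by norm_num)
  obtain ⟨K, hK⟩ := IsCompact.exists_bound_of_continuousOn isCompact_Icc
    (hdercont.mono (Icc_subset_Ici_self : Icc (0:ℝ) x₁ ⊆ Ici 0))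
  have hPlin : ∀ x ∈ Icc (0:ℝ) x₁, P x ≤ K * x := by
    intro x hx
    have h := Convex.norm_image_sub_le_of_norm_hasDerivWithin_le hPder hK (convex_Icc _ _)
      (left_mem_Icc.mpr hx₁0.le) hx
    rw [hP0, sub_zero, sub_zero, Real.norm_eq_abs, Real.norm_eq_abs, abs_of_nonneg hx.1] at h
    exact (le_abs_self _).trans h
  have hgclin : ∀ x ∈ Icc (0:ℝ) x₁, gammaC P x ≤ K * x :=
    fun x hx => (gammaC_le (hPnn x hx.1)).trans (hPlin x hx)
  -- the comparison function ψ
  set r : ℝ := -(1/s) with hrdef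
  have hrpowcont : ContinuousOn (fun t : ℝ => t ^ r) (Ioi 0) := fun t ht =>
    (Real.continuousAt_rpow_const t r (Or.inl (ne_of_gt ht))).continuousWithinAt
  have hFderiv : ∀ x : ℝ, 0 < x → HasDerivAt (fun y => ∫ t in x₁..y, t ^ r) (x ^ r) x := by
    intro x hx
    apply intervalIntegral.integral_hasDerivAt_right
    · exact intervalIntegral.intervalIntegrable_rpow (Or.inr (notMem_uIcc_of_lt hx₁0 hx))
    · exact ContinuousOn.stronglyMeasurableAtFilter isOpen_Ioi hrpowcont x hx
    · exact Real.continuousAt_rpow_const x r (Or.inl (ne_of_gt hx))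
  set ψ : ℝ → ℝ := fun x => γ x * x ^ r + K / s * ∫ t in x₁..x, t ^ r with hψdef
  have hγcont1 : ContinuousOn γ (Ioc 0 x₁) :=
    fun x hx => ((hode x (hsub hx)).continuousWithinAt).mono hsub
  have hψderiv : ∀ x ∈ Ioo (0:ℝ) x₁, HasDerivAt ψ
      ((γ x + γ x ^ 2 - P x) / (s * x * γ x) * x ^ r + γ x * (r * x ^ (r - 1))
        + K / s * x ^ r) x := by
    intro x hx
    have hx0 : 0 < x := hx.1
    have hnbhd : Ioc 0 x₀ ∈ 𝓝 x :=
      mem_of_superset (isOpen_Ioo.mem_nhds ⟨hx0, hx.2.trans hx₁lt⟩) Ioo_subset_Ioc_self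
    have hγd : HasDerivAt γ ((γ x + γ x ^ 2 - P x) / (s * x * γ x)) x :=
      (hode x ⟨hx0, (hx.2.trans hx₁lt).le⟩).hasDerivAt hnbhd
    have h1 := hγd.mul (Real.hasDerivAt_rpow_const (p := r) (Or.inl hx0.ne'))
    have h2 := (hFderiv x hx0).const_mul (K / s)
    exact h1.add h2
  have hψmono : MonotoneOn ψ (Ioc 0 x₁) := by
    apply monotoneOn_of_deriv_nonneg (convex_Ioc 0 x₁)
    · apply ContinuousOn.add
      · exact hγcont1.mul (hrpowcont.mono Ioc_subset_Ioi_self)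
      · exact continuousOn_const.mul
          (fun x hx => ((hFderiv x hx.1).continuousAt).continuousWithinAt)
    · intro x hx
      rw [interior_Ioc] at hx
      exact (hψderiv x hx).differentiableAt.differentiableWithinAt
    · intro x hx
      rw [interior_Ioc] at hx
      rw [(hψderiv x hx).deriv]
      have hx0 : 0 < x := hx.1
      have hγx : 0 < γ x := hpos x (hsub ⟨hx.1, hx.2.le⟩)
      set gc := gammaC P x with hgc
      have hgceq : gc ^ 2 + gc = P x := gammaC_eq (hPnn x hx0.le)
      have hgc0 : 0 ≤ gc := gammaC_nonneg (hPnn x hx0.le)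
      have hgcγ : gc < γ x := key x ⟨hx.1, hx.2.le⟩
      have hKx : gc ≤ K * x := hgclin x ⟨hx0.le, hx.2.le⟩
      have hfac : γ x + γ x ^ 2 - P x = (γ x - gc) * (1 + γ x + gc) := by
        linear_combination hgceq
      have hxr : x ^ (r-1) = x ^ r / x := by
        rw [Real.rpow_sub hx0, Real.rpow_one]
      have heq : (γ x + γ x ^ 2 - P x) / (s * x * γ x) * x ^ r + γ x * (r * x ^ (r - 1))
          + K / s * x ^ r
          = x ^ r * (((γ x - gc) * (1 + γ x + gc) - γ x ^ 2 + K * x * γ x)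
              / (s * x * γ x)) := by
        rw [hfac, hxr, hrdef]
        field_simp
        ring
      rw [heq]
      apply mul_nonneg (Real.rpow_nonneg hx0.le _)
      apply div_nonneg _ (by positivity)
      nlinarith [mul_nonneg (sub_nonneg.mpr hgcγ.le) hgc0,
        mul_nonneg (sub_nonneg.mpr hKx) hγx.le]
  -- the constant C
  set C1 : ℝ := γ x₁ * x₁ ^ r with hC1def
  have hγx₁ : 0 < γ x₁ := hpos x₁ ⟨hx₁0, hx₁lt.le⟩
  have hC1pos : 0 < C1 := mul_pos hγx₁ (Real.rpow_pos_of_pos hx₁0 r)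
  set C : ℝ := max C1 (K / s) + 1 with hCdef
  have hCC1 : C1 ≤ C := by
    have := le_max_left C1 (K/s); rw [hCdef]; linarith
  have hCK : K / s ≤ C := by
    have := le_max_right C1 (K/s); rw [hCdef]; linarith
  have hCpos : 0 < C := lt_of_lt_of_le hC1pos hCC1
  -- the quantitative bound
  have hbound : ∀ x ∈ Ioc (0:ℝ) x₁, γ x ≤ C * x ^ (1/s) + C * Bs s x x₁ := by
    intro x hx
    have hx0 : 0 < x := hx.1
    have hψle : ψ x ≤ ψ x₁ := hψmono hx (right_mem_Ioc.mpr hx₁0) hx.2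
    have hψx₁ : ψ x₁ = C1 := by
      simp [hψdef, hC1def, intervalIntegral.integral_same]
    have hxpow : x ^ r * x ^ (1/s) = 1 := by
      rw [← Real.rpow_add hx0, hrdef]
      norm_num
    have hBs0 : 0 ≤ Bs s x x₁ := by
      unfold Bs
      apply mul_nonneg (Real.rpow_nonneg hx0.le _)
      apply intervalIntegral.integral_nonneg hx.2
      intro t ht
      exact Real.rpow_nonneg (le_trans hx0.le ht.1) _
    have hBseq : (∫ t in x₁..x, t ^ r) * x ^ (1/s) = -Bs s x x₁ := by
      rw [intervalIntegral.integral_symm, Bs, ← hrdef]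
      ring
    have h3 : (γ x * x ^ r + K / s * ∫ t in x₁..x, t ^ r) * x ^ (1/s) ≤ C1 * x ^ (1/s) :=
      mul_le_mul_of_nonneg_right (by rw [← hψx₁]; exact hψle) (Real.rpow_nonneg hx0.le _)
    rw [add_mul, mul_assoc (γ x), mul_assoc (K/s), hxpow, hBseq, mul_one] at h3
    have hxs0 : 0 ≤ x ^ (1/s) := Real.rpow_nonneg hx0.le _
    have hb1 : K/s * Bs s x x₁ ≤ C * Bs s x x₁ := mul_le_mul_of_nonneg_right hCK hBs0
    have hb2 : C1 * x^(1/s) ≤ C * x^(1/s) := mul_le_mul_of_nonneg_right hCC1 hxs0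
    linarith
  -- limits
  have h1s : Tendsto (fun x : ℝ => x ^ (1/s)) (𝓝[>] (0:ℝ)) (𝓝 0) := by
    have h := (Real.continuousAt_rpow_const 0 (1/s) (Or.inr (by positivity))).tendsto
    rw [Real.zero_rpow (by positivity : (1/s : ℝ) ≠ 0)] at h
    exact h.mono_left nhdsWithin_le_nhds
  have hBsT : Tendsto (fun x => Bs s x x₁) (𝓝[>] (0:ℝ)) (𝓝 0) := by
    rcases eq_or_ne s 1 with hs1 | hs1
    · subst hs1
      have heq : ∀ᶠ x in 𝓝[>] (0:ℝ), x * Real.log x₁ - Real.log x * x = Bs 1 x x₁ := by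
        filter_upwards [eventually_mem_nhdsWithin] with x hx
        have hx0 : (0:ℝ) < x := hx
        unfold Bs
        norm_num
        simp only [Real.rpow_neg_one]
        rw [integral_inv_of_pos hx0 hx₁0, Real.log_div (ne_of_gt hx₁0) (ne_of_gt hx0)]
        ring
      refine Tendsto.congr' heq ?_
      have ht1 : Tendsto (fun x : ℝ => x * Real.log x₁) (𝓝[>] (0:ℝ)) (𝓝 0) := by
        have hc : Continuous (fun x : ℝ => x * Real.log x₁) := continuous_id.mul continuous_const
        simpa using (hc.tendsto 0).mono_left nhdsWithin_le_nhds
      have ht2 : Tendsto (fun x : ℝ => Real.log x * x) (𝓝[>] (0:ℝ)) (𝓝 0) := by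
        have := tendsto_log_mul_rpow_nhdsGT_zero zero_lt_one
        simpa [Real.rpow_one] using this
      simpa using ht1.sub ht2
    · have hr1 : r + 1 ≠ 0 := by
        rw [hrdef]
        intro h
        apply hs1
        have h2 : (1:ℝ)/s = 1 := by linarith
        rw [one_div, inv_eq_one] at h2
        exact h2
      have hrne : r ≠ -1 := fun h => hr1 (by rw [h]; ring)
      have heq : ∀ᶠ x in 𝓝[>] (0:ℝ),
          (x₁ ^ (r+1) * x ^ (1/s) - x) / (r+1) = Bs s x x₁ := by
        filter_upwards [eventually_mem_nhdsWithin] with x hx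
        have hx0 : (0:ℝ) < x := hx
        unfold Bs
        rw [← hrdef, integral_rpow (Or.inr ⟨hrne, notMem_uIcc_of_lt hx0 hx₁0⟩)]
        have hxpow : x ^ (1/s) * x ^ (r+1) = x := by
          rw [← Real.rpow_add hx0, show 1/s + (r+1) = 1 by rw [hrdef]; ring, Real.rpow_one]
        field_simp
        linear_combination hxpow
      refine Tendsto.congr' heq ?_
      have hid : Tendsto (fun x : ℝ => x) (𝓝[>] (0:ℝ)) (𝓝 0) :=
        (continuous_id.tendsto (0:ℝ)).mono_left nhdsWithin_le_nhds
      have := ((h1s.const_mul (x₁ ^ (r+1))).sub hid).div_const (r+1)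
      simpa using this
  have hTend : Tendsto γ (𝓝[>] (0:ℝ)) (𝓝 0) := by
    refine tendsto_of_tendsto_of_tendsto_of_le_of_le' tendsto_const_nhds
      (by simpa using (h1s.const_mul C).add (hBsT.const_mul C) :
        Tendsto (fun x => C * x ^ (1/s) + C * Bs s x x₁) (𝓝[>] (0:ℝ)) (𝓝 0)) ?_ ?_
    · filter_upwards [Ioc_mem_nhdsGT_of_mem ⟨le_refl (0:ℝ), hx₁0⟩] with x hx
      exact (hpos x (hsub hx)).le
    · filter_upwards [Ioc_mem_nhdsGT_of_mem ⟨le_refl (0:ℝ), hx₁0⟩] with x hx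
      exact hbound x hx
  refine ⟨x₁, ⟨hx₁0, hx₁lt.le⟩, C, hCpos, ?_, hTend⟩
  intro x hx
  refine ⟨key x hx, ?_⟩
  have h := hbound x hx
  have h0 : 0 ≤ gammaC P x := gammaC_nonneg (hPnn x hx.1.le)
  linarith
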